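/- Let G be a GSOS language with init(closed(Σ_G)) = 2^Act, and let G' be any disjoint extension of G. Then for all initial transition formulae F and F' over variables and actions in Act, ⊨_G F ⇒ F' holds if and only if ⊨_{G'} F ⇒ F' holds. -/

import Mathlib

/-!
Common infrastructure for formalizing results about GSOS languages
("A rule-matching bisimulation method", Aceto et al.).

* Variables are natural numbers (a countably infinite set).
* Terms over a signature given by a type `Op` of operation symbols with
  arities `ar : Op → ℕ`.
* GSOS rules and ruloids, the induced (sound and supported) transition
  relation, bisimilarity, ruloid systems, valid ruloids, initial transition
  formulae and rule-matching bisimulation.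
-/

namespace GSOSPaper

/-- Terms over operation symbols `Op` with arity function `ar`;
variables are natural numbers. -/
inductive Tm (Op : Type) (ar : Op → ℕ) : Type
  | var : ℕ → Tm Op ar
  | app : (f : Op) → (Fin (ar f) → Tm Op ar) → Tm Op ar

namespace Tm

variable {Op : Type} {ar : Op → ℕ}

/-- The set of variables occurring in a term. -/
def vars : Tm Op ar → Set ℕ
  | .var x => {x}
  | .app _ ts => ⋃ i, (ts i).vars

/-- The set of operation symbols occurring in a term. -/
def ops : Tm Op ar → Set Op
  | .var _ => ∅
  | .app f ts => insert f (⋃ i, (ts i).ops)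

/-- A term is closed if it contains no variables. -/
def IsClosed (t : Tm Op ar) : Prop := t.vars = ∅

/-- Applying a substitution to a term. -/
def subst (σ : ℕ → Tm Op ar) : Tm Op ar → Tm Op ar
  | .var x => σ x
  | .app f ts => .app f fun i => (ts i).subst σ

/-- Renaming the variables of a term. -/
def rename (r : ℕ → ℕ) (t : Tm Op ar) : Tm Op ar :=
  t.subst fun x => .var (r x)

/-- The number of occurrences of the variable `v` in a term. -/
def count (v : ℕ) : Tm Op ar → ℕ
  | .var x => if x = v then 1 else 0
  | .app _ ts => ∑ i, (ts i).count v

/-- Transporting a term along an arity-preserving map of operation symbols. -/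
def map {Op' : Type} {ar' : Op' → ℕ} (ι : Op → Op') (h : ∀ f, ar' (ι f) = ar f) :
    Tm Op ar → Tm Op' ar'
  | .var x => .var x
  | .app f ts => .app (ι f) fun i => (ts (Fin.cast (h f) i)).map ι h

end Tm

/-- A closed `S`-substitution: every variable is sent to a closed term all of
whose operation symbols come from `S`. -/
def ClosedSub {Op : Type} {ar : Op → ℕ} (S : Set Op) (σ : ℕ → Tm Op ar) : Prop :=
  ∀ x, (σ x).IsClosed ∧ (σ x).ops ⊆ S

/-- A rule (this data type is used both for GSOS rules and for ruloids):
positive premises `x →^a y` (coded as `(x, a, y)`), negative premises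
`x ↛^a` (coded as `(x, a)`), a source term, an action, and a target term. -/
structure Rule (Op : Type) (ar : Op → ℕ) (Act : Type) where
  pos : Set (ℕ × Act × ℕ)
  neg : Set (ℕ × Act)
  src : Tm Op ar
  act : Act
  tgt : Tm Op ar

namespace Rule

variable {Op : Type} {ar : Op → ℕ} {Act : Type}

/-- The source variables of a rule/ruloid: the variables of its source. -/
def sourceVars (ρ : Rule Op ar Act) : Set ℕ := ρ.src.vars

/-- The target variables of a rule/ruloid: the right-hand sides of its
positive premises. -/
def targetVars (ρ : Rule Op ar Act) : Set ℕ := {y | ∃ x a, (x, a, y) ∈ ρ.pos}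

/-- Well-formedness of a rule/ruloid: finitely many premises; the left-hand
sides of premises are source variables; the target variables are distinct
from the source variables and pairwise distinct (each target variable occurs
in exactly one positive premise); the variables of the target of the
conclusion occur among the source and target variables. -/
def WF (ρ : Rule Op ar Act) : Prop :=
  ρ.pos.Finite ∧ ρ.neg.Finite ∧
  (∀ ⦃x a y⦄, (x, a, y) ∈ ρ.pos → x ∈ ρ.sourceVars ∧ y ∉ ρ.sourceVars) ∧
  (∀ ⦃x a⦄, (x, a) ∈ ρ.neg → x ∈ ρ.sourceVars) ∧
  (∀ ⦃x a y x' a'⦄, (x, a, y) ∈ ρ.pos → (x', a', y) ∈ ρ.pos → x = x' ∧ a = a') ∧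
  ρ.tgt.vars ⊆ ρ.sourceVars ∪ ρ.targetVars

/-- A rule is in GSOS format if it is well formed and its source is
`f(x₁, …, x_l)` for an operation symbol `f` and distinct variables `x_i`. -/
def IsGSOSForm (ρ : Rule Op ar Act) : Prop :=
  ρ.WF ∧ ∃ (f : Op) (x : Fin (ar f) → ℕ), Function.Injective x ∧
    ρ.src = Tm.app f fun i => Tm.var (x i)

/-- A rule is a de Simone rule if it has no negative premises, at most one
positive premise per source variable, a target in which every variable occurs
at most once, and a target containing no source variable that occurs in a
positive premise. -/
def IsDeSimone (ρ : Rule Op ar Act) : Prop :=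
  ρ.neg = ∅ ∧
  (∀ ⦃x a y a' y'⦄, (x, a, y) ∈ ρ.pos → (x, a', y') ∈ ρ.pos → a = a' ∧ y = y') ∧
  (∀ v, ρ.tgt.count v ≤ 1) ∧
  (∀ ⦃x a y⦄, (x, a, y) ∈ ρ.pos → x ∉ ρ.tgt.vars)

/-- `ρ` has principal operation `f`. -/
def PrincipalIs (ρ : Rule Op ar Act) (f : Op) : Prop := ∃ ts, ρ.src = Tm.app f ts

/-- A rule is non-inheriting if no source variable occurs in the target of
its conclusion. -/
def NonInheriting (ρ : Rule Op ar Act) : Prop := ∀ x ∈ ρ.sourceVars, x ∉ ρ.tgt.vars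

/-- Renaming the variables of a rule/ruloid. -/
def rename (r : ℕ → ℕ) (ρ : Rule Op ar Act) : Rule Op ar Act where
  pos := (fun p : ℕ × Act × ℕ => (r p.1, p.2.1, r p.2.2)) '' ρ.pos
  neg := (fun p : ℕ × Act => (r p.1, p.2)) '' ρ.neg
  src := ρ.src.rename r
  act := ρ.act
  tgt := ρ.tgt.rename r

/-- Transporting a rule along an arity-preserving map of operation symbols. -/
def map {Op' : Type} {ar' : Op' → ℕ} (ι : Op → Op') (h : ∀ f, ar' (ι f) = ar f)
    (ρ : Rule Op ar Act) : Rule Op' ar' Act where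
  pos := ρ.pos
  neg := ρ.neg
  src := ρ.src.map ι h
  act := ρ.act
  tgt := ρ.tgt.map ι h

end Rule

/-- A language: a set of operation symbols together with a set of rules.
(Well-formedness is the separate predicate `Lang.WellFormed`.) -/
structure Lang (Op : Type) (ar : Op → ℕ) (Act : Type) where
  ops : Set Op
  rules : Set (Rule Op ar Act)

/-- A GSOS language: finitely many operations, finitely many rules, and all
rules in GSOS format over the signature. -/
def Lang.WellFormed {Op : Type} {ar : Op → ℕ} {Act : Type} (L : Lang Op ar Act) : Prop :=
  L.ops.Finite ∧ L.rules.Finite ∧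
  ∀ ρ ∈ L.rules, ρ.IsGSOSForm ∧ ρ.src.ops ⊆ L.ops ∧ ρ.tgt.ops ⊆ L.ops

variable {Op : Type} {ar : Op → ℕ} {Act : Type}

/-- `σ` satisfies the antecedents of `ρ` with respect to the transition
relation `Tr`. -/
def Satisfies (Tr : Tm Op ar → Act → Tm Op ar → Prop) (σ : ℕ → Tm Op ar)
    (ρ : Rule Op ar Act) : Prop :=
  (∀ ⦃x a y⦄, (x, a, y) ∈ ρ.pos → Tr (σ x) a (σ y)) ∧
  (∀ ⦃x a⦄, (x, a) ∈ ρ.neg → ∀ q, ¬ Tr (σ x) a q)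

/-- A rule/ruloid is sound for `Tr` (relative to closed `S`-substitutions) if
every closed substitution satisfying its antecedents yields an instance of
its conclusion that is in `Tr`. -/
def Rule.Sound (Tr : Tm Op ar → Act → Tm Op ar → Prop) (S : Set Op)
    (ρ : Rule Op ar Act) : Prop :=
  ∀ σ, ClosedSub S σ → Satisfies Tr σ ρ →
    Tr (ρ.src.subst σ) ρ.act (ρ.tgt.subst σ)

/-- The rule/ruloid `ρ` supports the transition `p →^a q`. -/
def Supports (Tr : Tm Op ar → Act → Tm Op ar → Prop) (S : Set Op)
    (ρ : Rule Op ar Act) (p : Tm Op ar) (a : Act) (q : Tm Op ar) : Prop :=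
  ∃ σ, ClosedSub S σ ∧ Satisfies Tr σ ρ ∧
    ρ.src.subst σ = p ∧ ρ.act = a ∧ ρ.tgt.subst σ = q

/-- `Tr` is the transition relation induced by the language `L`: it is sound
(every rule instance with satisfied antecedents is a transition) and
supported (every transition is supported by some rule of `L`).  For a GSOS
language there is a unique such relation. -/
def IsTransRel (L : Lang Op ar Act) (Tr : Tm Op ar → Act → Tm Op ar → Prop) : Prop :=
  (∀ ρ ∈ L.rules, ρ.Sound Tr L.ops) ∧
  (∀ p a q, Tr p a q → ∃ ρ ∈ L.rules, Supports Tr L.ops ρ p a q)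

/-- A rule is junk if it supports no transition. -/
def IsJunk (L : Lang Op ar Act) (Tr : Tm Op ar → Act → Tm Op ar → Prop)
    (ρ : Rule Op ar Act) : Prop :=
  ∀ p a q, ¬ Supports Tr L.ops ρ p a q

/-- `R` is a bisimulation with respect to `Tr`. -/
def IsBisim (Tr : Tm Op ar → Act → Tm Op ar → Prop)
    (R : Tm Op ar → Tm Op ar → Prop) : Prop :=
  Symmetric R ∧ ∀ p q, R p q → ∀ a p', Tr p a p' → ∃ q', Tr q a q' ∧ R p' q'

/-- Bisimilarity with respect to `Tr`. -/
def Bisim (Tr : Tm Op ar → Act → Tm Op ar → Prop) (p q : Tm Op ar) : Prop :=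
  ∃ R, IsBisim Tr R ∧ R p q

/-- `ρ` is a ruloid for the context `D` (over the operations `S`). -/
def IsRuloidFor (S : Set Op) (ρ : Rule Op ar Act) (D : Tm Op ar) : Prop :=
  ρ.WF ∧ ρ.src = D ∧ ρ.tgt.ops ⊆ S

/-- A set `R` of ruloids is supporting for the context `D` and the action `c`:
whenever a closed instance of `D` has a `c`-transition, that transition is an
instance of the conclusion of a ruloid of `R` under a closed substitution
satisfying its antecedents. -/
def SupportingFor (Tr : Tm Op ar → Act → Tm Op ar → Prop) (S : Set Op)
    (R : Set (Rule Op ar Act)) (D : Tm Op ar) (c : Act) : Prop :=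
  ∀ σ₀ q, ClosedSub S σ₀ → Tr (D.subst σ₀) c q →
    ∃ ρ ∈ R, ∃ σ, ClosedSub S σ ∧ Satisfies Tr σ ρ ∧
      ρ.src.subst σ = D.subst σ₀ ∧ ρ.act = c ∧ ρ.tgt.subst σ = q

/-- `rul` assigns to each term `P` a finite set `rul P` of ruloids for `P`
that is sound and supporting for `P` and each action (such an assignment
exists by the Ruloid Theorem). -/
def IsRuloidSystem (L : Lang Op ar Act) (Tr : Tm Op ar → Act → Tm Op ar → Prop)
    (rul : Tm Op ar → Set (Rule Op ar Act)) : Prop :=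
  ∀ P : Tm Op ar,
    (rul P).Finite ∧
    (∀ ρ ∈ rul P, IsRuloidFor L.ops ρ P) ∧
    (∀ ρ ∈ rul P, ρ.Sound Tr L.ops) ∧
    (∀ c : Act, SupportingFor Tr L.ops {ρ | ρ ∈ rul P ∧ ρ.act = c} P c)

/-- The ruloid system `rul` is junk-free: every ruloid in it supports some
transition, i.e. its antecedents are satisfiable by a closed substitution. -/
def JunkFree (L : Lang Op ar Act) (Tr : Tm Op ar → Act → Tm Op ar → Prop)
    (rul : Tm Op ar → Set (Rule Op ar Act)) : Prop :=
  ∀ P, ∀ ρ ∈ rul P, ∃ σ, ClosedSub L.ops σ ∧ Satisfies Tr σ ρ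

/-- `ρ` is a valid ruloid for `P`: it is obtained from a ruloid `ρ' ∈ rul P`
by an injective renaming of its target variables to variables that are not
among the source variables of `ρ`. -/
def IsValidRuloid (rul : Tm Op ar → Set (Rule Op ar Act)) (P : Tm Op ar)
    (ρ : Rule Op ar Act) : Prop :=
  ∃ ρ' ∈ rul P, ∃ r : ℕ → ℕ,
    (∀ x, x ∉ ρ'.targetVars → r x = x) ∧
    Set.InjOn r ρ'.targetVars ∧
    (∀ y ∈ ρ'.targetVars, r y ∉ ρ.sourceVars) ∧
    ρ = ρ'.rename r

/-- `σ` satisfies `hyps(ρ)`, the conjunction of the initial transition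
formulae corresponding to the antecedents of `ρ` (the atom `x →^a` for a
positive premise `x →^a y`, and its negation for a negative premise). -/
def HypsSat (Tr : Tm Op ar → Act → Tm Op ar → Prop) (σ : ℕ → Tm Op ar)
    (ρ : Rule Op ar Act) : Prop :=
  (∀ ⦃x a y⦄, (x, a, y) ∈ ρ.pos → ∃ q, Tr (σ x) a q) ∧
  (∀ ⦃x a⦄, (x, a) ∈ ρ.neg → ∀ q, ¬ Tr (σ x) a q)

/-- `R` is a rule-matching bisimulation (Definition 5.1). -/
def IsRMBisim (L : Lang Op ar Act) (Tr : Tm Op ar → Act → Tm Op ar → Prop)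
    (rul : Tm Op ar → Set (Rule Op ar Act))
    (R : Tm Op ar → Tm Op ar → Prop) : Prop :=
  Symmetric R ∧
  ∀ P Q, R P Q → ∀ ρ ∈ rul P,
    ∃ J : Set (Rule Op ar Act), J.Finite ∧
      (∀ ρ' ∈ J, IsValidRuloid rul Q ρ') ∧
      (∀ ρ' ∈ J,
        ρ'.act = ρ.act ∧
        R ρ.tgt ρ'.tgt ∧
        (ρ'.targetVars ∪ ρ.targetVars) ∩ (ρ.sourceVars ∪ ρ'.sourceVars) = ∅ ∧
        (∀ y ∈ ρ.targetVars ∩ ρ'.targetVars,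
          ∃ x, x ∈ ρ.sourceVars ∩ ρ'.sourceVars ∧
            ∃ b, (x, b, y) ∈ ρ.pos ∧ (x, b, y) ∈ ρ'.pos)) ∧
      (∀ σ, ClosedSub L.ops σ → HypsSat Tr σ ρ → ∃ ρ' ∈ J, HypsSat Tr σ ρ')

/-- Rule-matching bisimilarity. -/
def RMBisim (L : Lang Op ar Act) (Tr : Tm Op ar → Act → Tm Op ar → Prop)
    (rul : Tm Op ar → Set (Rule Op ar Act)) (P Q : Tm Op ar) : Prop :=
  ∃ R, IsRMBisim L Tr rul R ∧ R P Q

/-- Initial transition formulae: propositional logic over atoms `x →^a`. -/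
inductive TF (Act : Type) : Type
  | tru : TF Act
  | atom : ℕ → Act → TF Act
  | not : TF Act → TF Act
  | and : TF Act → TF Act → TF Act

/-- Satisfaction of an initial transition formula by a substitution. -/
def TF.Sat (Tr : Tm Op ar → Act → Tm Op ar → Prop) (σ : ℕ → Tm Op ar) :
    TF Act → Prop
  | .tru => True
  | .atom x a => ∃ q, Tr (σ x) a q
  | .not F => ¬ TF.Sat Tr σ F
  | .and F F' => TF.Sat Tr σ F ∧ TF.Sat Tr σ F'

/-- Semantic entailment `⊨ F ⇒ F'` over closed `S`-substitutions. -/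
def Entails (S : Set Op) (Tr : Tm Op ar → Act → Tm Op ar → Prop)
    (F F' : TF Act) : Prop :=
  ∀ σ, ClosedSub S σ → TF.Sat Tr σ F → TF.Sat Tr σ F'

/-- `L'` (over operations `Op'`) is a disjoint extension of `L` (over `Op`),
along the arity-preserving injection `ι`: the signature and rules of `L'`
include those of `L`, and `L'` has no new rules for the operations of `L`. -/
def IsDisjointExtension {Op' : Type} {ar' : Op' → ℕ} (ι : Op → Op')
    (h : ∀ f, ar' (ι f) = ar f) (L' : Lang Op' ar' Act) (L : Lang Op ar Act) : Prop :=
  Function.Injective ι ∧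
  (∀ f ∈ L.ops, ι f ∈ L'.ops) ∧
  (∀ ρ ∈ L.rules, ρ.map ι h ∈ L'.rules) ∧
  (∀ ρ' ∈ L'.rules, (∃ f ∈ L.ops, ρ'.PrincipalIs (ι f)) → ∃ ρ ∈ L.rules, ρ' = ρ.map ι h)

/-- The term `f(t, u)` for a binary operation symbol `f`. -/
def binT (f : Op) (t u : Tm Op ar) : Tm Op ar :=
  Tm.app f fun i => if (i : ℕ) = 0 then t else u

/-- The term `f` for a constant symbol `f`. -/
def constT (f : Op) : Tm Op ar := Tm.app f fun _ => Tm.var 0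

/-- The term `f(t)` for a unary operation symbol `f`. -/
def unT (f : Op) (t : Tm Op ar) : Tm Op ar := Tm.app f fun _ => t


section Statement7

open Classical

variable {Op Op' : Type} {ar : Op → ℕ} {ar' : Op' → ℕ} {Act : Type}

private lemma castSurj (ι : Op → Op') (h : ∀ f, ar' (ι f) = ar f) (f : Op) :
    Function.Surjective (Fin.cast (h f)) := (finCongr (h f)).surjective

lemma Tm.vars_map (ι : Op → Op') (h : ∀ f, ar' (ι f) = ar f) :
    ∀ t : Tm Op ar, (t.map ι h).vars = t.vars := by
  intro t
  induction t with
  | var x => rfl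
  | app f ts ih =>
    simp only [Tm.map, Tm.vars, ih]
    exact (castSurj ι h f).iUnion_comp (fun j => (ts j).vars)

lemma Tm.ops_map (ι : Op → Op') (h : ∀ f, ar' (ι f) = ar f) :
    ∀ t : Tm Op ar, (t.map ι h).ops = ι '' t.ops := by
  intro t
  induction t with
  | var x => simp [Tm.map, Tm.ops]
  | app f ts ih =>
    simp only [Tm.map, Tm.ops, ih, Set.image_insert_eq, ← Set.image_iUnion]
    rw [(castSurj ι h f).iUnion_comp (fun j => (ts j).ops)]

lemma Tm.isClosed_subst (σ : ℕ → Tm Op ar) (hσ : ∀ x, (σ x).IsClosed) :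
    ∀ t : Tm Op ar, (t.subst σ).IsClosed := by
  intro t
  induction t with
  | var x => exact hσ x
  | app f ts ih =>
    show (⋃ i, ((ts i).subst σ).vars) = ∅
    simp only [Tm.IsClosed] at ih
    simp [ih]

lemma Tm.ops_subst_subset {S : Set Op} (σ : ℕ → Tm Op ar) (hσ : ∀ x, (σ x).ops ⊆ S) :
    ∀ t : Tm Op ar, t.ops ⊆ S → (t.subst σ).ops ⊆ S := by
  intro t
  induction t with
  | var x => intro _; exact hσ x
  | app f ts ih =>
    intro ht
    have hf : f ∈ S := ht (Set.mem_insert _ _)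
    have hts : ∀ i, (ts i).ops ⊆ S := fun i g hg =>
      ht (Set.mem_insert_iff.2 (Or.inr (Set.mem_iUnion.2 ⟨i, hg⟩)))
    show insert f (⋃ i, ((ts i).subst σ).ops) ⊆ S
    rw [Set.insert_subset_iff]
    exact ⟨hf, Set.iUnion_subset fun i => ih i (hts i)⟩

lemma Tm.subst_congr (σ τ : ℕ → Tm Op ar) :
    ∀ t : Tm Op ar, (∀ x ∈ t.vars, σ x = τ x) → t.subst σ = t.subst τ := by
  intro t
  induction t with
  | var x => intro hx; exact hx x rfl
  | app f ts ih =>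
    intro hx
    show Tm.app f _ = Tm.app f _
    exact congrArg (Tm.app f) (funext fun i => ih i fun x hxv => hx x (Set.mem_iUnion.2 ⟨i, hxv⟩))

lemma Tm.map_subst (ι : Op → Op') (h : ∀ f, ar' (ι f) = ar f) (σ : ℕ → Tm Op ar) :
    ∀ t : Tm Op ar, (t.subst σ).map ι h = (t.map ι h).subst (fun x => (σ x).map ι h) := by
  intro t
  induction t with
  | var x => rfl
  | app f ts ih =>
    show Tm.app (ι f) _ = Tm.app (ι f) _
    exact congrArg (Tm.app (ι f)) (funext fun i => ih _)

lemma target_closed {L : Lang Op ar Act} (hL : L.WellFormed)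
    {Tr : Tm Op ar → Act → Tm Op ar → Prop} (hTr : IsTransRel L Tr)
    {p : Tm Op ar} {a : Act} {q : Tm Op ar} (hq : Tr p a q) :
    q.IsClosed ∧ q.ops ⊆ L.ops := by
  obtain ⟨ρ, hρ, σ, hσ, -, -, -, rfl⟩ := hTr.2 p a q hq
  exact ⟨Tm.isClosed_subst σ (fun x => (hσ x).1) _,
    Tm.ops_subst_subset σ (fun x => (hσ x).2) _ ((hL.2.2 ρ hρ).2.2)⟩

lemma sat_iff {Tr : Tm Op ar → Act → Tm Op ar → Prop}
    {Tr' : Tm Op' ar' → Act → Tm Op' ar' → Prop} {σ : ℕ → Tm Op ar} {σ' : ℕ → Tm Op' ar'}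
    (hat : ∀ x a, (∃ q, Tr (σ x) a q) ↔ ∃ q', Tr' (σ' x) a q') :
    ∀ F : TF Act, TF.Sat Tr σ F ↔ TF.Sat Tr' σ' F := by
  intro F
  induction F with
  | tru => simp [TF.Sat]
  | atom x a => exact hat x a
  | not F ih => simp only [TF.Sat]; exact not_congr ih
  | and F G ihF ihG => simp only [TF.Sat]; exact and_congr ihF ihG

lemma init_map_iff
    (L : Lang Op ar Act) (hL : L.WellFormed)
    (Tr : Tm Op ar → Act → Tm Op ar → Prop) (hTr : IsTransRel L Tr)
    (L' : Lang Op' ar' Act) (hL' : L'.WellFormed)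
    (ι : Op → Op') (h : ∀ f, ar' (ι f) = ar f)
    (hext : IsDisjointExtension ι h L' L)
    (Tr' : Tm Op' ar' → Act → Tm Op' ar' → Prop) (hTr' : IsTransRel L' Tr')
    (p₀ : Tm Op ar) (hp₀ : p₀.IsClosed ∧ p₀.ops ⊆ L.ops) :
    ∀ p : Tm Op ar, p.IsClosed → p.ops ⊆ L.ops →
      ∀ a : Act, (∃ q, Tr p a q) ↔ ∃ q', Tr' (p.map ι h) a q' := by
  classical
  have himg : ι '' L.ops ⊆ L'.ops := Set.image_subset_iff.2 hext.2.1
  intro p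
  induction p with
  | var x =>
    intro hcl
    exact absurd hcl (by simp [Tm.IsClosed, Tm.vars])
  | app f ts ih =>
    intro hcl hops a
    have hclts : ∀ i, (ts i).IsClosed := fun i =>
      Set.subset_empty_iff.1
        ((Set.subset_iUnion (fun j => (ts j).vars) i).trans (le_of_eq hcl))
    have hopsts : ∀ i, (ts i).ops ⊆ L.ops := fun i g hg =>
      hops (Set.mem_insert_iff.2 (Or.inr (Set.mem_iUnion.2 ⟨i, hg⟩)))
    have hf : f ∈ L.ops := hops (Set.mem_insert _ _)
    constructor
    · rintro ⟨q, hq⟩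
      obtain ⟨ρ, hρL, σ, hσ, hsat, hsrc, hact, -⟩ := hTr.2 _ _ _ hq
      obtain ⟨hWF, g, xs, hinj, hsrceq⟩ := (hL.2.2 ρ hρL).1
      rw [hsrceq] at hsrc
      have hsrc' : Tm.app g (fun i => σ (xs i)) = Tm.app f ts := hsrc
      injection hsrc'.symm with hfg hts
      subst hfg
      have hcomp : ∀ i, σ (xs i) = ts i := fun i => (congrFun (eq_of_heq hts) i).symm
      have hsv : ∀ x ∈ ρ.sourceVars, ∃ i, xs i = x := by
        intro x hx
        have hx' : x ∈ (Tm.app f fun i => Tm.var (xs i)).vars := by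
          rw [← hsrceq]; exact hx
        simpa [Tm.vars, Set.mem_iUnion] using hx'
      have hgoal : ∀ z, ∃ t' : Tm Op' ar', t'.IsClosed ∧ t'.ops ⊆ L'.ops ∧
          (z ∈ ρ.sourceVars → t' = (σ z).map ι h) ∧
          (∀ x b, (x, b, z) ∈ ρ.pos → Tr' ((σ x).map ι h) b t') := by
        intro z
        by_cases hz : ∃ x b, (x, b, z) ∈ ρ.pos
        · obtain ⟨x, b, hmem⟩ := hz
          obtain ⟨i, rfl⟩ := hsv x (hWF.2.2.1 hmem).1
          have hzns : z ∉ ρ.sourceVars := (hWF.2.2.1 hmem).2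
          have htr : Tr (ts i) b (σ z) := by
            have := hsat.1 hmem; rwa [hcomp i] at this
          obtain ⟨q', hq'⟩ := (ih i (hclts i) (hopsts i) b).1 ⟨σ z, htr⟩
          refine ⟨q', (target_closed hL' hTr' hq').1, (target_closed hL' hTr' hq').2,
            fun hzs => absurd hzs hzns, ?_⟩
          intro x' b' hmem'
          obtain ⟨hx', hb'⟩ := hWF.2.2.2.2.1 hmem' hmem
          rw [hx', hb', hcomp i]
          exact hq'
        · refine ⟨(σ z).map ι h, ?_, ?_, fun _ => rfl, ?_⟩
          · show ((σ z).map ι h).vars = ∅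
            rw [Tm.vars_map]; exact (hσ z).1
          · rw [Tm.ops_map]
            exact (Set.image_mono (f := ι) (hσ z).2).trans himg
          · intro x b hmem; exact absurd ⟨x, b, hmem⟩ hz
      choose σ' hσ'1 hσ'2 hσ'3 hσ'4 using hgoal
      have hcs' : ClosedSub L'.ops σ' := fun z => ⟨hσ'1 z, hσ'2 z⟩
      have hsats : Satisfies Tr' σ' (ρ.map ι h) := by
        constructor
        · intro x b y hmem
          have hxs : x ∈ ρ.sourceVars := (hWF.2.2.1 hmem).1
          rw [hσ'3 x hxs]
          exact hσ'4 y x b hmem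
        · intro x b hmem q' hq'
          have hxs : x ∈ ρ.sourceVars := hWF.2.2.2.1 hmem
          obtain ⟨i, rfl⟩ := hsv x hxs
          rw [hσ'3 _ hxs, hcomp i] at hq'
          obtain ⟨q2, hq2⟩ := (ih i (hclts i) (hopsts i) b).2 ⟨q', hq'⟩
          refine hsat.2 hmem q2 ?_
          rw [hcomp i]
          exact hq2
      have hsnd := hTr'.1 _ (hext.2.2.1 ρ hρL) σ' hcs' hsats
      have hsrcmap : (ρ.map ι h).src.subst σ' = (Tm.app f ts).map ι h := by
        have e1 : (ρ.map ι h).src = ρ.src.map ι h := rfl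
        rw [e1, Tm.subst_congr σ' (fun x => (σ x).map ι h) _ ?_, ← Tm.map_subst, hsrceq, hsrc]
        intro x hx
        rw [Tm.vars_map] at hx
        exact hσ'3 x hx
      rw [hsrcmap] at hsnd
      exact ⟨_, hact ▸ hsnd⟩
    · rintro ⟨q', hq'⟩
      obtain ⟨ρ', hρ'L, σ'', hσ'', hsat', hsrc', hact', -⟩ := hTr'.2 _ _ _ hq'
      obtain ⟨hWF', g', ys, hinj', hsrceq'⟩ := (hL'.2.2 ρ' hρ'L).1
      have hsrc0 : Tm.app g' (fun i => σ'' (ys i))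
          = Tm.app (ι f) (fun i => (ts (Fin.cast (h f) i)).map ι h) := by
        rw [hsrceq'] at hsrc'; exact hsrc'
      injection hsrc0 with hg _
      subst hg
      have hprin : ρ'.PrincipalIs (ι f) := ⟨_, hsrceq'⟩
      obtain ⟨ρ, hρL, rfl⟩ := hext.2.2.2 ρ' hρ'L ⟨f, hf, hprin⟩
      obtain ⟨hWF, g, xs, hinj, hsrceq⟩ := (hL.2.2 ρ hρL).1
      have hsrc2 : Tm.app (ι g) (fun i => σ'' (xs (Fin.cast (h g) i)))
          = Tm.app (ι f) (fun i => (ts (Fin.cast (h f) i)).map ι h) := by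
        have e1 : (ρ.map ι h).src = ρ.src.map ι h := rfl
        rw [e1, hsrceq] at hsrc'
        exact hsrc'
      injection hsrc2 with hgf hts
      have hfg' : f = g := (hext.1 hgf).symm
      subst hfg'
      have hcomp0 : ∀ i : Fin (ar' (ι f)),
          σ'' (xs (Fin.cast (h f) i)) = (ts (Fin.cast (h f) i)).map ι h :=
        fun i => congrFun (eq_of_heq hts) i
      have hcompj : ∀ j, σ'' (xs j) = (ts j).map ι h := by
        intro j
        have hcast : Fin.cast (h f) (Fin.cast (h f).symm j) = j := by
          apply Fin.ext; simp
        have := hcomp0 (Fin.cast (h f).symm j)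
        rwa [hcast] at this
      have hsv' : ∀ j, xs j ∈ ρ.sourceVars := by
        intro j
        show xs j ∈ ρ.src.vars
        rw [hsrceq]
        simp only [Tm.vars, Set.mem_iUnion]
        exact ⟨j, rfl⟩
      have hsv : ∀ x ∈ ρ.sourceVars, ∃ i, xs i = x := by
        intro x hx
        have hx' : x ∈ (Tm.app f fun i => Tm.var (xs i)).vars := by
          rw [← hsrceq]; exact hx
        simpa [Tm.vars, Set.mem_iUnion] using hx'
      have hgoal : ∀ z, ∃ t : Tm Op ar, t.IsClosed ∧ t.ops ⊆ L.ops ∧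
          (∀ j, xs j = z → t = ts j) ∧
          (∀ j b, (xs j, b, z) ∈ ρ.pos → Tr (ts j) b t) := by
        intro z
        by_cases hz0 : ∃ j, xs j = z
        · obtain ⟨j, rfl⟩ := hz0
          refine ⟨ts j, hclts j, hopsts j, ?_, ?_⟩
          · intro j' hj'; rw [hinj hj']
          · intro j' b hmem
            exact absurd (hsv' j) (hWF.2.2.1 hmem).2
        · by_cases hz : ∃ j b, (xs j, b, z) ∈ ρ.pos
          · obtain ⟨j, b, hmem⟩ := hz
            have htr' : Tr' ((ts j).map ι h) b (σ'' z) := by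
              have := hsat'.1 hmem; rwa [hcompj j] at this
            obtain ⟨q, hqq⟩ := (ih j (hclts j) (hopsts j) b).2 ⟨σ'' z, htr'⟩
            refine ⟨q, (target_closed hL hTr hqq).1, (target_closed hL hTr hqq).2,
              fun j' hj' => absurd ⟨j', hj'⟩ hz0, ?_⟩
            intro j' b' hmem'
            obtain ⟨hx', hb'⟩ := hWF.2.2.2.2.1 hmem' hmem
            rw [hinj hx', hb']
            exact hqq
          · exact ⟨p₀, hp₀.1, hp₀.2, fun j hj => absurd ⟨j, hj⟩ hz0,
              fun j b hmem => absurd ⟨j, b, hmem⟩ hz⟩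
      choose σ hσ1 hσ2 hσ3 hσ4 using hgoal
      have hcs : ClosedSub L.ops σ := fun z => ⟨hσ1 z, hσ2 z⟩
      have hsats : Satisfies Tr σ ρ := by
        constructor
        · intro x b y hmem
          obtain ⟨j, rfl⟩ := hsv x (hWF.2.2.1 hmem).1
          rw [hσ3 (xs j) j rfl]
          exact hσ4 y j b hmem
        · intro x b hmem q hq
          obtain ⟨j, rfl⟩ := hsv x (hWF.2.2.2.1 hmem)
          rw [hσ3 (xs j) j rfl] at hq
          obtain ⟨q2, hq2⟩ := (ih j (hclts j) (hopsts j) b).1 ⟨q, hq⟩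
          rw [← hcompj j] at hq2
          exact hsat'.2 hmem q2 hq2
      have hsnd := hTr.1 ρ hρL σ hcs hsats
      have hsrcp : ρ.src.subst σ = Tm.app f ts := by
        rw [hsrceq]
        show Tm.app f (fun i => σ (xs i)) = Tm.app f ts
        exact congrArg (Tm.app f) (funext fun i => hσ3 (xs i) i rfl)
      rw [hsrcp] at hsnd
      have hacteq : ρ.act = a := hact'
      exact ⟨_, hacteq ▸ hsnd⟩

end Statement7

/-- if `init(closed(Σ_G)) = 2^Act` and `G'` is a disjoint
extension of `G`, then semantic entailment between initial transition
formulae is the same in `G` and in `G'`. -/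
theorem entails_disjoint_extension_invariant
    {Op Op' : Type} {ar : Op → ℕ} {ar' : Op' → ℕ} {Act : Type}
    [Finite Act] [Nonempty Act]
    (L : Lang Op ar Act) (hL : L.WellFormed)
    (Tr : Tm Op ar → Act → Tm Op ar → Prop) (hTr : IsTransRel L Tr)
    (hinit : ∀ A : Set Act, ∃ p : Tm Op ar, p.IsClosed ∧ p.ops ⊆ L.ops ∧
      ∀ a, (∃ q, Tr p a q) ↔ a ∈ A)
    (L' : Lang Op' ar' Act) (hL' : L'.WellFormed)
    (ι : Op → Op') (h : ∀ f, ar' (ι f) = ar f)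
    (hext : IsDisjointExtension ι h L' L)
    (Tr' : Tm Op' ar' → Act → Tm Op' ar' → Prop) (hTr' : IsTransRel L' Tr')
    (F F' : TF Act) :
    Entails L.ops Tr F F' ↔ Entails L'.ops Tr' F F' := by
  classical
  obtain ⟨p₀, hp₀1, hp₀2, -⟩ := hinit ∅
  have key := init_map_iff L hL Tr hTr L' hL' ι h hext Tr' hTr' p₀ ⟨hp₀1, hp₀2⟩
  have himg : ι '' L.ops ⊆ L'.ops := Set.image_subset_iff.2 hext.2.1
  constructor
  · intro hE σ' hσ' hF
    choose p hp1 hp2 hp3 using fun x => hinit {a | ∃ q, Tr' (σ' x) a q}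
    have hcs : ClosedSub L.ops p := fun x => ⟨hp1 x, hp2 x⟩
    have hat : ∀ x a, (∃ q, Tr (p x) a q) ↔ ∃ q', Tr' (σ' x) a q' := fun x a => hp3 x a
    exact (sat_iff hat F').1 (hE p hcs ((sat_iff hat F).2 hF))
  · intro hE σ hσ hF
    have hcs' : ClosedSub L'.ops (fun x => (σ x).map ι h) := by
      intro x
      constructor
      · show ((σ x).map ι h).vars = ∅
        rw [Tm.vars_map]; exact (hσ x).1
      · rw [Tm.ops_map]
        exact (Set.image_mono (f := ι) (hσ x).2).trans himg
    have hat : ∀ x a, (∃ q, Tr (σ x) a q) ↔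
        ∃ q', Tr' ((fun x => (σ x).map ι h) x) a q' :=
      fun x a => key (σ x) (hσ x).1 (hσ x).2 a
    exact (sat_iff hat F').2 (hE _ hcs' ((sat_iff hat F).1 hF))

end GSOSPaper
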